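/- iDEM estimator equals importance-sampled TSI: Let p be a smooth positive density with suitable decay, q_t(x̃) = ∫ N(x̃; x_0, γ^{−2}I) p(x_0) dx_0 with γ = a/b, and proposal π(x_0|x̃) = N(x_0; x̃, γ^{−2}I). Then ∇_{x̃} log E_{π(x_0|x̃)}[p(x_0)] = E_{π(x_0|x̃)}[(q(x_0|x̃)/π(x_0|x̃)) · ∇_{x_0} log p(x_0)], where q(x_0|x̃) ∝ N(x̃; x_0, γ^{−2}I)p(x_0). -/

import Mathlib

open MeasureTheory

/-- Isotropic Gaussian density `N(x; y, γ⁻² I)` on `ℝ^d` (symmetric in `x, y`). -/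
noncomputable def gaussIso {d : ℕ} (γ : ℝ)
    (x y : EuclideanSpace ℝ (Fin d)) : ℝ :=
  (γ ^ 2 / (2 * Real.pi)) ^ ((d : ℝ) / 2) *
    Real.exp (-γ ^ 2 * ‖x - y‖ ^ 2 / 2)

lemma gaussIso_symm {d : ℕ} (γ : ℝ) (x y : EuclideanSpace ℝ (Fin d)) :
    gaussIso γ x y = gaussIso γ y x := by
  unfold gaussIso; rw [norm_sub_rev]

lemma gaussIso_pos {d : ℕ} {γ : ℝ} (hγ : 0 < γ) (x y : EuclideanSpace ℝ (Fin d)) :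
    0 < gaussIso γ x y :=
  mul_pos (Real.rpow_pos_of_pos (div_pos (pow_pos hγ 2) (by positivity)) _)
    (Real.exp_pos _)

lemma gaussIso_le {d : ℕ} {γ : ℝ} (hγ : 0 < γ) (x y : EuclideanSpace ℝ (Fin d)) :
    gaussIso γ x y ≤ (γ ^ 2 / (2 * Real.pi)) ^ ((d : ℝ) / 2) := by
  have hC : 0 < (γ ^ 2 / (2 * Real.pi)) ^ ((d : ℝ) / 2) :=
    Real.rpow_pos_of_pos (div_pos (pow_pos hγ 2) (by positivity)) _
  have hexp : Real.exp (-γ ^ 2 * ‖x - y‖ ^ 2 / 2) ≤ 1 := by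
    rw [Real.exp_le_one_iff]
    nlinarith [sq_nonneg (γ * ‖x - y‖)]
  exact mul_le_of_le_one_right hC.le hexp

lemma gaussIso_hasGradientAt {d : ℕ} (γ : ℝ) (a x : EuclideanSpace ℝ (Fin d)) :
    HasGradientAt (fun y => gaussIso γ y a)
      ((-γ ^ 2 * gaussIso γ x a) • (x - a)) x := by
  set C : ℝ := (γ ^ 2 / (2 * Real.pi)) ^ ((d : ℝ) / 2) with hC
  have h1 : HasFDerivAt (fun y : EuclideanSpace ℝ (Fin d) => ‖y - a‖ ^ 2)
      (2 • (innerSL ℝ (x - a))) x := by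
    have := ((hasFDerivAt_id x).sub_const a).norm_sq
    simpa using this
  have h2 := h1.const_mul (-γ ^ 2 / 2)
  have h3 := h2.exp
  have h4 := h3.const_mul C
  have heq : (fun y : EuclideanSpace ℝ (Fin d) =>
      C * Real.exp (-γ ^ 2 / 2 * ‖y - a‖ ^ 2)) = fun y => gaussIso γ y a := by
    funext y; unfold gaussIso; rw [← hC]; ring_nf
  rw [heq] at h4
  rw [hasGradientAt_iff_hasFDerivAt]
  refine h4.congr_fderiv ?_
  ext w
  simp [InnerProductSpace.toDual_apply_apply, real_inner_smul_left, gaussIso,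
    real_inner_smul_left, two_smul, ← hC]
  ring


lemma aux_mul_exp_le (s : ℝ) (hs : 0 ≤ s) : s * Real.exp (-s ^ 2 / 2) ≤ 1 := by
  have h := Real.add_one_le_exp (s ^ 2 / 2)
  have hs2 : s ≤ Real.exp (s ^ 2 / 2) := by nlinarith [sq_nonneg (s - 1)]
  have h3 : Real.exp (-s ^ 2 / 2) = (Real.exp (s ^ 2 / 2))⁻¹ := by
    rw [← Real.exp_neg]; ring_nf
  rw [h3, ← div_eq_mul_inv]
  exact (div_le_one (Real.exp_pos _)).mpr hs2

/-- The iDEM estimator equals an importance-sampled Target Score Identity: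
`∇_{x̃} log E_{π(x_0|x̃)}[p(x_0)]
  = E_{π(x_0|x̃)}[(q(x_0|x̃)/π(x_0|x̃)) ∇_{x_0} log p(x_0)]`,
where `π(x_0|x̃) = N(x_0; x̃, γ⁻² I)` and `q(x_0|x̃) ∝ N(x̃; x_0, γ⁻² I) p(x_0)`. -/
theorem idem_importance_sampled_tsi {d : ℕ} (γ : ℝ) (hγ : 0 < γ)
    (p : EuclideanSpace ℝ (Fin d) → ℝ)
    (hp_smooth : Differentiable ℝ p) (hp_pos : ∀ x, 0 < p x)
    (hp_int : Integrable p)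
    (hgrad_int : Integrable (fun x => gradient p x))
    (qt : EuclideanSpace ℝ (Fin d) → ℝ)
    (hqt : ∀ x, qt x = ∫ x0, gaussIso γ x x0 * p x0)
    (xt : EuclideanSpace ℝ (Fin d)) (hpos : 0 < qt xt)
    -- differentiation under the integral sign is justified:
    (hswap : HasGradientAt qt
      (∫ x0, p x0 • gradient (fun y => gaussIso γ y x0) xt) xt)
    -- decay permitting integration by parts:
    (hibp : ∫ x0, gradient (fun y => gaussIso γ xt y * p y) x0 = 0) :
    gradient (fun y => Real.log (∫ x0, gaussIso γ y x0 * p x0)) xt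
      = ∫ x0, gaussIso γ xt x0 •
          ((gaussIso γ xt x0 * p x0 / qt xt) / gaussIso γ xt x0) •
            gradient (fun z => Real.log (p z)) x0 := by
  have hC : (0:ℝ) < (γ ^ 2 / (2 * Real.pi)) ^ ((d : ℝ) / 2) :=
    Real.rpow_pos_of_pos (div_pos (pow_pos hγ 2) (by positivity)) _
  set C : ℝ := (γ ^ 2 / (2 * Real.pi)) ^ ((d : ℝ) / 2) with hCdef
  have hqt_ne : qt xt ≠ 0 := ne_of_gt hpos
  have hgpos : ∀ x0, 0 < gaussIso γ xt x0 := fun x0 => gaussIso_pos hγ xt x0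
  have hcontp : Continuous p := hp_smooth.continuous
  have hcont : Continuous (fun x0 => gaussIso γ xt x0) := by
    unfold gaussIso; fun_prop
  have hgrad1 : ∀ x0, gradient (fun y => gaussIso γ y x0) xt
      = (-γ ^ 2 * gaussIso γ xt x0) • (xt - x0) :=
    fun x0 => (gaussIso_hasGradientAt γ x0 xt).gradient
  have hgrad2 : ∀ x0, HasGradientAt (fun y => gaussIso γ xt y)
      ((γ ^ 2 * gaussIso γ xt x0) • (xt - x0)) x0 := by
    intro x0
    have h := gaussIso_hasGradientAt γ xt x0
    have hfun : (fun y => gaussIso γ y xt) = fun y => gaussIso γ xt y :=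
      funext fun y => gaussIso_symm γ y xt
    rw [hfun] at h
    convert h using 1
    rw [gaussIso_symm γ x0 xt]
    module
  -- integrability
  have I1 : Integrable (fun x0 => gaussIso γ xt x0 • gradient p x0) := by
    refine Integrable.mono' (hgrad_int.norm.const_mul C)
      (hcont.aestronglyMeasurable.smul hgrad_int.aestronglyMeasurable)
      (Filter.Eventually.of_forall fun x0 => ?_)
    rw [norm_smul, Real.norm_eq_abs, abs_of_pos (hgpos x0)]
    exact mul_le_mul_of_nonneg_right (gaussIso_le hγ xt x0) (norm_nonneg _)
  have hformula : ∀ x0, γ ^ 2 * gaussIso γ xt x0 * ‖xt - x0‖ ≤ C * γ := by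
    intro x0
    have haux := aux_mul_exp_le (γ * ‖xt - x0‖) (by positivity)
    have harg : -γ ^ 2 * ‖xt - x0‖ ^ 2 / 2 = -(γ * ‖xt - x0‖) ^ 2 / 2 := by ring
    have heq : γ ^ 2 * gaussIso γ xt x0 * ‖xt - x0‖
        = C * γ * ((γ * ‖xt - x0‖) * Real.exp (-(γ * ‖xt - x0‖) ^ 2 / 2)) := by
      unfold gaussIso
      rw [← hCdef, ← harg]
      ring
    rw [heq]
    nth_rewrite 2 [← mul_one (C * γ)]
    exact mul_le_mul_of_nonneg_left haux (by positivity)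
  have I2 : Integrable (fun x0 => p x0 • gradient (fun y => gaussIso γ y x0) xt) := by
    simp only [hgrad1]
    refine Integrable.mono' (hp_int.const_mul (C * γ))
      (Continuous.aestronglyMeasurable (by fun_prop))
      (Filter.Eventually.of_forall fun x0 => ?_)
    rw [norm_smul, norm_smul, Real.norm_eq_abs, abs_of_pos (hp_pos x0),
      Real.norm_eq_abs, neg_mul, abs_neg, abs_of_pos (mul_pos (pow_pos hγ 2) (hgpos x0))]
    calc p x0 * (γ ^ 2 * gaussIso γ xt x0 * ‖xt - x0‖)
        ≤ p x0 * (C * γ) := mul_le_mul_of_nonneg_left (hformula x0) (hp_pos x0).le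
      _ = C * γ * p x0 := by ring
  -- pointwise product rule and step C
  have hpoint : ∀ x0, gradient (fun y => gaussIso γ xt y * p y) x0
      = gaussIso γ xt x0 • gradient p x0
        - p x0 • gradient (fun y => gaussIso γ y x0) xt := by
    intro x0
    have hp' : HasGradientAt p (gradient p x0) x0 := (hp_smooth x0).hasGradientAt
    have hmul := (hgrad2 x0).hasFDerivAt.mul hp'.hasFDerivAt
    have hg : HasGradientAt (fun y => gaussIso γ xt y * p y)
        (gaussIso γ xt x0 • gradient p x0
          + p x0 • ((γ ^ 2 * gaussIso γ xt x0) • (xt - x0))) x0 := by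
      rw [hasGradientAt_iff_hasFDerivAt, map_add, _root_.map_smul, _root_.map_smul]
      exact hmul
    rw [hg.gradient, hgrad1 x0]
    module
  have key : (∫ x0, gaussIso γ xt x0 • gradient p x0)
      = ∫ x0, p x0 • gradient (fun y => gaussIso γ y x0) xt := by
    simp only [hpoint] at hibp
    rw [integral_sub I1 I2, sub_eq_zero] at hibp
    exact hibp
  -- step A: gradient of the log of the integral
  have hlogfun : (fun y => Real.log (∫ x0, gaussIso γ y x0 * p x0))
      = fun y => Real.log (qt y) := by
    funext y; rw [hqt y]
  have hG : HasGradientAt (fun y => Real.log (qt y))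
      ((qt xt)⁻¹ • ∫ x0, p x0 • gradient (fun y => gaussIso γ y x0) xt) xt := by
    rw [hasGradientAt_iff_hasFDerivAt, _root_.map_smul]
    exact hswap.hasFDerivAt.log hqt_ne
  rw [hlogfun, hG.gradient]
  -- step B: simplify the right-hand side integrand
  have hrhs : ∀ x0, gaussIso γ xt x0 •
      ((gaussIso γ xt x0 * p x0 / qt xt) / gaussIso γ xt x0) •
        gradient (fun z => Real.log (p z)) x0
      = (qt xt)⁻¹ • (gaussIso γ xt x0 • gradient p x0) := by
    intro x0
    have hlogp : gradient (fun z => Real.log (p z)) x0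
        = (p x0)⁻¹ • gradient p x0 := by
      have hgl : HasGradientAt (fun z => Real.log (p z))
          ((p x0)⁻¹ • gradient p x0) x0 := by
        rw [hasGradientAt_iff_hasFDerivAt, _root_.map_smul]
        exact ((hp_smooth x0).hasGradientAt.hasFDerivAt).log (hp_pos x0).ne'
      exact hgl.gradient
    rw [hlogp, smul_smul, smul_smul, smul_smul]
    congr 1
    field_simp [hqt_ne, (hgpos x0).ne', (hp_pos x0).ne']
  simp only [hrhs]
  rw [integral_smul, key]
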